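/- Fix δ > 0 and let Q_δ(a) = δ(⌊a/δ⌋ + 1/2) be the uniform quantizer with resolution δ. If τ is uniformly distributed on [-δ/2, δ/2], then for every a ∈ R, E[Q_δ(a + τ)] = a. -/

import Mathlib

open MeasureTheory Real

/-- The uniform quantizer with resolution `δ`: `Q_δ(a) = δ(⌊a/δ⌋ + 1/2)`. -/
noncomputable def Q (δ a : ℝ) : ℝ := δ * (⌊a / δ⌋ + 1 / 2)

/-- The uniform distribution on `[a, b]`. -/
noncomputable def unif (a b : ℝ) : Measure ℝ :=
  (ENNReal.ofReal (b - a))⁻¹ • volume.restrict (Set.Icc a b)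

lemma floor_mono : Monotone (fun x : ℝ => (⌊x⌋ : ℝ)) :=
  fun _ _ h => Int.cast_le.mpr (Int.floor_mono h)

lemma integral_floor (c : ℝ) : ∫ t in c..(c + 1), (⌊t⌋ : ℝ) = c := by
  set n : ℤ := ⌊c⌋ with hn
  have h1 : c ≤ (n : ℝ) + 1 := (Int.lt_floor_add_one c).le
  have h2 : (n : ℝ) + 1 ≤ c + 1 := by linarith [Int.floor_le c]
  have hint : ∀ x y : ℝ, IntervalIntegrable (fun t : ℝ => (⌊t⌋ : ℝ)) volume x y :=
    fun x y => floor_mono.intervalIntegrable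
  have hsplit : (∫ t in c..((n:ℝ)+1), (⌊t⌋ : ℝ)) + ∫ t in ((n:ℝ)+1)..(c+1), (⌊t⌋ : ℝ)
      = ∫ t in c..(c + 1), (⌊t⌋ : ℝ) :=
    intervalIntegral.integral_add_adjacent_intervals (hint _ _) (hint _ _)
  have hA : ∫ t in c..((n:ℝ)+1), (⌊t⌋ : ℝ) = ((n:ℝ)+1 - c) * n := by
    rw [intervalIntegral.integral_congr_ae (g := fun _ => (n : ℝ)), intervalIntegral.integral_const]
    · simp [smul_eq_mul]
    · have : ∀ᵐ x : ℝ ∂volume, x ≠ (n:ℝ)+1 := by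
        have h0 : volume {((n:ℝ)+1)} = 0 := measure_singleton _
        rw [MeasureTheory.ae_iff]
        convert h0 using 2
        ext x; simp
      filter_upwards [this] with x hx hxI
      rw [Set.uIoc_of_le h1] at hxI
      have hx1 : c < x := hxI.1
      have hx2 : x < (n:ℝ) + 1 := lt_of_le_of_ne hxI.2 hx
      have : ⌊x⌋ = n := by
        have hl : (n : ℝ) ≤ x := le_trans (Int.floor_le c) hx1.le
        exact Int.floor_eq_iff.mpr ⟨hl, by exact_mod_cast hx2⟩
      simp [this]
  have hB : ∫ t in ((n:ℝ)+1)..(c+1), (⌊t⌋ : ℝ) = (c + 1 - ((n:ℝ)+1)) * ((n:ℝ)+1) := by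
    rw [intervalIntegral.integral_congr_ae (g := fun _ => ((n:ℝ)+1)), intervalIntegral.integral_const]
    · simp [smul_eq_mul]
    · refine Filter.Eventually.of_forall (fun x hxI => ?_)
      rw [Set.uIoc_of_le h2] at hxI
      have hx1 : (n:ℝ) + 1 < x := hxI.1
      have hx2 : x ≤ c + 1 := hxI.2
      have : ⌊x⌋ = n + 1 := by
        refine Int.floor_eq_iff.mpr ⟨by exact_mod_cast hx1.le, ?_⟩
        push_cast
        linarith [Int.lt_floor_add_one c]
      simp [this]
  rw [← hsplit, hA, hB]; ring

/-- Dithered uniform quantization is unbiased: if `τ ~ Uniform[-δ/2, δ/2]`, then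
for every `a ∈ ℝ`, `E[Q_δ(a + τ)] = a`. -/
theorem stmt2 (δ : ℝ) (hδ : 0 < δ) (a : ℝ) :
    ∫ τ, Q δ (a + τ) ∂(unif (-(δ / 2)) (δ / 2)) = a := by
  have hδ' : δ ≠ 0 := hδ.ne'
  have hle : -(δ/2) ≤ δ/2 := by linarith
  have key : ∫ τ in (-(δ/2))..(δ/2), Q δ (a + τ) = δ * a := by
    have hint : IntervalIntegrable (fun τ : ℝ => (⌊(a + τ)/δ⌋ : ℝ)) volume (-(δ/2)) (δ/2) := by
      have : Monotone (fun τ : ℝ => (⌊(a + τ)/δ⌋ : ℝ)) := by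
        intro x y h
        have hd : (a + x)/δ ≤ (a + y)/δ := by gcongr
        exact Int.cast_le.mpr (Int.floor_mono hd)
      exact this.intervalIntegrable
    have expand : ∀ τ : ℝ, Q δ (a + τ) = δ * (⌊(a + τ)/δ⌋ : ℝ) + δ * (1/2) := by
      intro τ; unfold Q; ring
    simp_rw [expand]
    rw [intervalIntegral.integral_add (hint.const_mul δ) intervalIntegrable_const,
      intervalIntegral.integral_const_mul, intervalIntegral.integral_const]
    have hfloor : ∫ τ in (-(δ/2))..(δ/2), (⌊(a + τ)/δ⌋ : ℝ) = δ * (a/δ - 1/2) := by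
      have h1 : ∀ τ : ℝ, (a + τ)/δ = τ/δ + a/δ := fun τ => by ring
      simp_rw [h1]
      rw [intervalIntegral.integral_comp_div_add (fun u => (⌊u⌋ : ℝ)) hδ' (a/δ)]
      have he1 : -(δ/2)/δ + a/δ = a/δ - 1/2 := by field_simp; ring
      have he2 : (δ/2)/δ + a/δ = (a/δ - 1/2) + 1 := by field_simp; ring
      rw [he1, he2, integral_floor, smul_eq_mul]
    rw [hfloor]
    simp only [smul_eq_mul]
    field_simp
    ring
  unfold unif
  rw [integral_smul_measure]
  have hsub : δ/2 - -(δ/2) = δ := by ring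
  rw [hsub]
  have hIcc : ∫ τ in Set.Icc (-(δ/2)) (δ/2), Q δ (a + τ) = δ * a := by
    rw [MeasureTheory.integral_Icc_eq_integral_Ioc, ← intervalIntegral.integral_of_le hle, key]
  rw [hIcc]
  rw [← ENNReal.ofReal_inv_of_pos hδ, ENNReal.toReal_ofReal (by positivity)]
  rw [smul_eq_mul]
  field_simp
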